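/- Assume the storage-related KKT conditions hold and u > 0. Then for every hour h: if Ω_{h+1} < Ω_h then s_h = 0, and if s_h = 0 then Ω_{h+1} ≤ Ω_h. Consequently the storage-balance dual Ω forms a monotonically nondecreasing sequence along any run of consecutive hours at which the stored energy is strictly positive, and it can strictly decrease only at hours where the stored energy is zero. -/

import Mathlib

/-!
STATEMENT 3: Under the storage-related KKT conditions of the core capacity
planning LP (hours indexed cyclically by `Fin n`) with `u > 0`:
for every hour `h`, if `Ω (h+1) < Ω h` then `s h = 0`, and if `s h = 0`
then `Ω (h+1) ≤ Ω h`.  Consequently `Ω` is nondecreasing along any run of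
consecutive hours at which the stored energy is strictly positive (it can
strictly decrease only at hours where the stored energy is zero).
-/

open Fin.NatCast in
theorem storage_dual_monotone_on_positive_runs
    {n : ℕ} [NeZero n]
    (u cu : ℝ) (s τ Ω β : Fin n → ℝ)
    -- (i) stationarity in s_h
    (hstat : ∀ h : Fin n, Ω h - Ω (h + 1) + τ h = β h)
    -- (ii) nonnegativity and complementary slackness for β (duals of s_h ≥ 0)
    (hβ_nonneg : ∀ h, 0 ≤ β h)
    (hβ_cs : ∀ h, β h * s h = 0)
    -- (iii) nonnegativity and complementary slackness for τ (duals of s_h ≤ u)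
    (hτ_nonneg : ∀ h, 0 ≤ τ h)
    (hτ_cs : ∀ h, τ h * (u - s h) = 0)
    -- (iv) primal feasibility 0 ≤ s_h ≤ u
    (hs_nonneg : ∀ h, 0 ≤ s h)
    (hs_le : ∀ h, s h ≤ u)
    -- u > 0
    (hu : 0 < u) :
    (∀ h : Fin n, Ω (h + 1) < Ω h → s h = 0) ∧
    (∀ h : Fin n, s h = 0 → Ω (h + 1) ≤ Ω h) ∧
    -- Ω is nondecreasing along any run of consecutive hours with s > 0:
    (∀ h : Fin n, ∀ j : ℕ, (∀ k : ℕ, k < j → 0 < s (h + (k : Fin n))) →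
      Ω h ≤ Ω (h + (j : Fin n))) := by
  -- If s h > 0 then β h = 0, hence Ω h - Ω (h+1) = -τ h ≤ 0.
  have key : ∀ h : Fin n, 0 < s h → Ω h ≤ Ω (h + 1) := by
    intro h hpos
    have hβ0 : β h = 0 := by
      rcases mul_eq_zero.mp (hβ_cs h) with h' | h'
      · exact h'
      · exact absurd h' (ne_of_gt hpos)
    have := hstat h
    rw [hβ0] at this
    nlinarith [hτ_nonneg h]
  refine ⟨?_, ?_, ?_⟩
  · intro h hlt
    by_contra hne
    have hpos : 0 < s h := lt_of_le_of_ne (hs_nonneg h) (Ne.symm hne)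
    exact absurd hlt (not_lt.mpr (key h hpos))
  · intro h hs0
    have hτ0 : τ h = 0 := by
      have := hτ_cs h
      rw [hs0, sub_zero] at this
      rcases mul_eq_zero.mp this with h' | h'
      · exact h'
      · exact absurd h' (ne_of_gt hu)
    have := hstat h
    rw [hτ0] at this
    nlinarith [hβ_nonneg h]
  · intro h j
    induction j with
    | zero => intro _; simp
    | succ j ih =>
      intro hrun
      have h1 : Ω h ≤ Ω (h + (j : Fin n)) :=
        ih (fun k hk => hrun k (Nat.lt_succ_of_lt hk))
      have h2 : 0 < s (h + (j : Fin n)) := hrun j (Nat.lt_succ_self j)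
      have h3 := key _ h2
      have hcast : h + ((j + 1 : ℕ) : Fin n) = h + (j : Fin n) + 1 := by
        push_cast
        open Fin.CommRing in ring
      rw [hcast]
      exact le_trans h1 h3
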